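/- Let X be a Banach space with X** = J_X(X) ⊕ F, F finite-dimensional, with continuous projection P onto J_X(X). If a net (F_α) in the unit ball of X** converges weakly to J_X(x) for some x ∈ X, and x is a point of weak-to-norm continuity of the unit ball of X, then F_α → J_X(x) in norm. -/

import Mathlib

open NormedSpace Filter Topology
open scoped ENNReal

noncomputable section

/-- The annihilator of a subspace `Y ⊆ X` inside the continuous dual of `X`. -/
def annih {X : Type*} [SeminormedAddCommGroup X] [NormedSpace ℝ X] (Y : Submodule ℝ X) :
    Submodule ℝ (StrongDual ℝ X) where
  carrier := {f | ∀ y ∈ Y, f y = 0}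
  add_mem' := by
    intro a b ha hb y hy
    simp [ContinuousLinearMap.add_apply, ha y hy, hb y hy]
  zero_mem' := by intro y hy; rfl
  smul_mem' := by
    intro c f hf y hy
    simp [hf y hy]

/-- A Banach space is reflexive iff the canonical embedding into its bidual is surjective. -/
def BReflexive (X : Type*) [SeminormedAddCommGroup X] [NormedSpace ℝ X] : Prop :=
  Function.Surjective (inclusionInDoubleDual ℝ X)

/-- A Banach space is coreflexive iff `X**/J_X(X)` is reflexive. -/
def Coreflexive (X : Type*) [SeminormedAddCommGroup X] [NormedSpace ℝ X] : Prop :=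
  @BReflexive ((StrongDual ℝ (StrongDual ℝ X)) ⧸ LinearMap.range (inclusionInDoubleDual ℝ X).toLinearMap)
    (Submodule.Quotient.seminormedAddCommGroup (M := StrongDual ℝ (StrongDual ℝ X)) _)
    (Submodule.Quotient.normedSpace (M := StrongDual ℝ (StrongDual ℝ X)) _ ℝ)

/-- The adjoint of a continuous linear map between normed spaces. -/
def adj {E F : Type*} [SeminormedAddCommGroup E] [NormedSpace ℝ E]
    [SeminormedAddCommGroup F] [NormedSpace ℝ F] (f : E →L[ℝ] F) :
    StrongDual ℝ F →L[ℝ] StrongDual ℝ E :=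
  (ContinuousLinearMap.compL ℝ E F ℝ).flip f

/-- `X` is weak*-sequentially dense in its bidual. -/
def WStarSeqDense (X : Type*) [SeminormedAddCommGroup X] [NormedSpace ℝ X] : Prop :=
  ∀ F : StrongDual ℝ (StrongDual ℝ X), ∃ x : ℕ → X, ∀ f : StrongDual ℝ X,
    Tendsto (fun n => inclusionInDoubleDual ℝ X (x n) f) atTop (𝓝 (F f))

/-- `x` is a point of weak-to-norm continuity of the closed unit ball of `X`. -/
def wPC (X : Type*) [SeminormedAddCommGroup X] [NormedSpace ℝ X] (x : X) : Prop :=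
  ∀ l : Filter X, (∀ᶠ y in l, ‖y‖ ≤ 1) →
    (∀ f : StrongDual ℝ X, Tendsto (fun y => f y) l (𝓝 (f x))) →
    Tendsto id l (𝓝 x)
set_option maxHeartbeats 2000000 in
set_option synthInstance.maxHeartbeats 400000 in
theorem stmt12 (X : Type*) [NormedAddCommGroup X] [NormedSpace ℝ X] [CompleteSpace X]
    (P : StrongDual ℝ (StrongDual ℝ X) →L[ℝ] StrongDual ℝ (StrongDual ℝ X))
    (hPP : P.comp P = P)
    (hrange : LinearMap.range (P : StrongDual ℝ (StrongDual ℝ X) →ₗ[ℝ] StrongDual ℝ (StrongDual ℝ X)) = LinearMap.range (inclusionInDoubleDual ℝ X : X →ₗ[ℝ] StrongDual ℝ (StrongDual ℝ X)))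
    (hker : @FiniteDimensional ℝ ↥(LinearMap.ker P.toLinearMap) _
      (Submodule.addCommGroup (M := StrongDual ℝ (StrongDual ℝ X)) _) _)
    (x : X) (hx : ‖x‖ ≤ 1) (hxPC : wPC X x)
    (l : Filter (StrongDual ℝ (StrongDual ℝ X))) (hl : ∀ᶠ F in l, ‖F‖ ≤ 1)
    (hweak : ∀ g : StrongDual ℝ (StrongDual ℝ (StrongDual ℝ X)),
      Tendsto (fun F => g F) l (𝓝 (g (inclusionInDoubleDual ℝ X x)))) :
    Tendsto id l (𝓝 (inclusionInDoubleDual ℝ X x)) := by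
  classical
  set J : X →L[ℝ] StrongDual ℝ (StrongDual ℝ X) := inclusionInDoubleDual ℝ X with hJdef
  have hJnorm : ∀ v : X, ‖J v‖ = ‖v‖ := fun v =>
    (inclusionInDoubleDualLi ℝ (E := X)).norm_map v
  have hPidem : ∀ G, P (P G) = P G := fun G => by
    have := congrArg (fun T : StrongDual ℝ (StrongDual ℝ X) →L[ℝ] StrongDual ℝ (StrongDual ℝ X) => T G) hPP
    simpa using this
  -- P fixes J x
  have hPJx : P (J x) = J x := by
    have hmem : J x ∈ LinearMap.range P.toLinearMap := by rw [hrange]; exact ⟨x, rfl⟩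
    obtain ⟨w, hw⟩ := hmem
    rw [← hw]; exact hPidem w
  -- F - P F lies in ker P
  have hQmem : ∀ F : StrongDual ℝ (StrongDual ℝ X), F - P F ∈ LinearMap.ker P.toLinearMap := by
    intro F
    rw [LinearMap.mem_ker]; show P (F - P F) = 0; rw [map_sub P, hPidem, sub_self]
  -- the ker-part tends to 0 in norm
  have hQ0 : Tendsto (fun F : StrongDual ℝ (StrongDual ℝ X) => F - P F) l (𝓝 0) := by
    set S : @Submodule ℝ (StrongDual ℝ (StrongDual ℝ X)) _ _
        (@NormedSpace.toModule ℝ (StrongDual ℝ (StrongDual ℝ X)) _ _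
          (inferInstance : NormedSpace ℝ (StrongDual ℝ (StrongDual ℝ X)))) :=
      (LinearMap.ker P.toLinearMap : Submodule ℝ (StrongDual ℝ (StrongDual ℝ X)))
    haveI : FiniteDimensional ℝ S := hker
    let b : Module.Basis (Fin (Module.finrank ℝ S)) ℝ S := Module.finBasis ℝ S
    choose g hg _ using fun i =>
      exists_extension_norm_eq S (LinearMap.toContinuousLinearMap (b.coord i))
    have hrepr : ∀ F : StrongDual ℝ (StrongDual ℝ X),
        F - P F = ∑ i, g i (F - P F) • ((b i : S) : StrongDual ℝ (StrongDual ℝ X)) := by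
      intro F
      have hv : (∑ i, b.repr ⟨F - P F, hQmem F⟩ i • b i) = ⟨F - P F, hQmem F⟩ :=
        b.sum_repr _
      have := congrArg (S.subtype) hv
      rw [map_sum] at this
      have hco : ∀ i, g i (F - P F) = b.repr ⟨F - P F, hQmem F⟩ i := by
        intro i
        have := hg i ⟨F - P F, hQmem F⟩
        simpa [Module.Basis.coord_apply] using this
      calc F - P F = S.subtype ⟨F - P F, hQmem F⟩ := rfl
        _ = ∑ i, b.repr ⟨F - P F, hQmem F⟩ i • ((b i : S) : StrongDual ℝ (StrongDual ℝ X)) := by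
            rw [← this]; simp
        _ = ∑ i, g i (F - P F) • ((b i : S) : StrongDual ℝ (StrongDual ℝ X)) := by
            exact Finset.sum_congr rfl fun i _ => by rw [hco i]
    have hQJx : (J x) - P (J x) = 0 := by rw [hPJx]; exact sub_self (J x)
    have hterm : ∀ i, Tendsto (fun F : StrongDual ℝ (StrongDual ℝ X) => g i (F - P F)) l (𝓝 0) := by
      intro i
      have h1 := (hweak (g i)).sub (hweak ((g i).comp P))
      rw [ContinuousLinearMap.comp_apply, hPJx, sub_self] at h1
      exact h1.congr fun F => (map_sub (g i) F (P F)).symm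
    have hsum : Tendsto
        (fun F : StrongDual ℝ (StrongDual ℝ X) => ∑ i, g i (F - P F) • ((b i : S) : StrongDual ℝ (StrongDual ℝ X)))
        l (𝓝 (∑ i : Fin (Module.finrank ℝ S), (0:ℝ) • ((b i : S) : StrongDual ℝ (StrongDual ℝ X)))) := by
      haveI : ContinuousAdd (StrongDual ℝ (StrongDual ℝ X)) :=
        (inferInstance : IsTopologicalAddGroup (StrongDual ℝ (StrongDual ℝ X))).toContinuousAdd
      exact tendsto_finset_sum _ fun i _ => (hterm i).smul_const _
    simp only [zero_smul, Finset.sum_const_zero] at hsum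
    exact hsum.congr fun F => (hrepr F).symm
  have hQn0 : Tendsto (fun F : StrongDual ℝ (StrongDual ℝ X) => ‖F - P F‖) l (𝓝 0) := by
    simpa [@norm_zero (StrongDual ℝ (StrongDual ℝ X)) _] using
      Tendsto.norm (E := StrongDual ℝ (StrongDual ℝ X)) hQ0
  -- pull P F back to X
  have hPmem : ∀ F : StrongDual ℝ (StrongDual ℝ X), ∃ z : X, J z = P F := by
    intro F
    have : P F ∈ LinearMap.range (inclusionInDoubleDual ℝ X).toLinearMap := by
      rw [← hrange]; exact ⟨F, rfl⟩
    exact this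
  choose y hy using hPmem
  set c : StrongDual ℝ (StrongDual ℝ X) → ℝ := fun F => max 1 ‖P F‖ with hcdef
  have hc_pos : ∀ F, 0 < c F := fun F => lt_of_lt_of_le zero_lt_one (le_max_left _ _)
  set z : StrongDual ℝ (StrongDual ℝ X) → X := fun F => (c F)⁻¹ • y F with hzdef
  have hJz : ∀ F, J (z F) = (c F)⁻¹ • P F := by
    intro F; rw [hzdef]; simp only [map_smul, hy]
  have hzn : ∀ F, ‖z F‖ ≤ 1 := by
    intro F
    have h1 : ‖z F‖ = ‖P F‖ / c F := by
      haveI : NormSMulClass ℝ (StrongDual ℝ (StrongDual ℝ X)) :=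
        @NormedSpace.toNormSMulClass ℝ (StrongDual ℝ (StrongDual ℝ X)) _ _ _
      rw [← hJnorm (z F), hJz F, norm_smul, Real.norm_eq_abs, abs_inv,
        abs_of_pos (hc_pos F), inv_mul_eq_div]
    rw [h1, div_le_one (hc_pos F)]
    exact le_max_right _ _
  -- c tends to 1
  have hc1 : Tendsto c l (𝓝 1) := by
    have hup : ∀ᶠ F in l, c F ≤ 1 + ‖F - P F‖ := by
      filter_upwards [hl] with F hF
      refine max_le (by linarith [norm_nonneg (F - P F)]) ?_
      have : ‖P F‖ ≤ ‖F‖ + ‖F - P F‖ := by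
        calc ‖P F‖ = ‖F - (F - P F)‖ := by rw [sub_sub_cancel F (P F)]
          _ ≤ ‖F‖ + ‖F - P F‖ := norm_sub_le F (F - P F)
      linarith
    have hlow : ∀ᶠ F in l, (1:ℝ) ≤ c F := Eventually.of_forall fun F => le_max_left _ _
    have hhi : Tendsto (fun F : StrongDual ℝ (StrongDual ℝ X) => 1 + ‖F - P F‖) l (𝓝 1) := by
      simpa using (tendsto_const_nhds (x := (1:ℝ))).add hQn0
    exact tendsto_of_tendsto_of_tendsto_of_le_of_le' tendsto_const_nhds hhi hlow hup
  -- weak convergence of z to x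
  have hweakz : ∀ f : StrongDual ℝ X, Tendsto (fun F => f (z F)) l (𝓝 (f x)) := by
    intro f
    have hval : ∀ F, f (z F) = (c F)⁻¹ * (P F) f := by
      intro F
      have := congrArg (fun G : StrongDual ℝ (StrongDual ℝ X) => G f) (hJz F)
      simpa [hJdef] using this
    have hPf : Tendsto (fun F => (P F) f) l (𝓝 (f x)) := by
      have := hweak ((inclusionInDoubleDual ℝ (StrongDual ℝ X) f).comp P)
      simp only [ContinuousLinearMap.comp_apply, hPJx] at this
      simpa [hJdef] using this
    have := (hc1.inv₀ one_ne_zero).mul hPf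
    simpa [hval] using this.congr fun F => (hval F).symm
  -- apply wPC
  have hzx : Tendsto z l (𝓝 x) := by
    have h1 : Tendsto id (l.map z) (𝓝 x) := by
      refine hxPC (l.map z) ?_ ?_
      · exact Filter.eventually_map.2 (Eventually.of_forall hzn)
      · intro f
        rw [Filter.tendsto_map'_iff]
        exact hweakz f
    exact h1.comp tendsto_map
  -- norm convergence of P F
  have hP : Tendsto (fun F : StrongDual ℝ (StrongDual ℝ X) => P F) l (𝓝 (J x)) := by
    have hJzx : Tendsto (fun F => J (z F)) l (𝓝 (J x)) := (J.continuous.tendsto x).comp hzx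
    have h2 : Tendsto (fun F => c F • J (z F)) l (𝓝 ((1:ℝ) • J x)) := hc1.smul hJzx
    have h3 : ∀ F, c F • J (z F) = P F := by
      intro F
      rw [hJz F, smul_inv_smul₀ (hc_pos F).ne']
    simpa using h2.congr h3
  haveI : ContinuousAdd (StrongDual ℝ (StrongDual ℝ X)) :=
    (inferInstance : IsTopologicalAddGroup (StrongDual ℝ (StrongDual ℝ X))).toContinuousAdd
  have := hP.add hQ0
  simp only [add_zero] at this
  exact this.congr fun F => add_sub_cancel (P F) F
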